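/- In the aligned-preference matching market above (preferences of both sides determined by common values U_{as}, all pairwise distinct), the unique stable matching is obtained greedily: repeatedly select the pair (a,s) with the highest value U_{as} among all pairs where s is unmatched and a has remaining capacity, and match them, until no feasible pair remains. -/

import Mathlib

open Finset

variable {A S : Type*}

def IsMatching [Fintype S] [DecidableEq A] (q : A → ℕ) (μ : S → Option A) : Prop :=
  ∀ a : A, (Finset.univ.filter (fun s => μ s = some a)).card ≤ q a

def Blocks [Fintype S] [DecidableEq A] (q : A → ℕ) (U : A → S → ℝ)
    (μ : S → Option A) (a : A) (s : S) : Prop :=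
  μ s ≠ some a ∧
  (∀ a' : A, μ s = some a' → U a' s < U a s) ∧
  ((Finset.univ.filter (fun s' => μ s' = some a)).card < q a ∨
    ∃ s' : S, μ s' = some a ∧ U a s' < U a s)

def IsStable [Fintype S] [DecidableEq A] (q : A → ℕ) (U : A → S → ℝ)
    (μ : S → Option A) : Prop :=
  IsMatching q μ ∧ ∀ (a : A) (s : S), ¬ Blocks q U μ a s

/-- One greedy step: match the pair `p = (a, s)` if `s` is currently unmatched and
`a` has residual capacity; otherwise leave the matching unchanged. -/
def greedyStep [Fintype S] [DecidableEq A] [DecidableEq S] (q : A → ℕ)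
    (p : A × S) (μ : S → Option A) : S → Option A :=
  if μ p.2 = none ∧ (Finset.univ.filter (fun s' => μ s' = some p.1)).card < q p.1 then
    Function.update μ p.2 (some p.1)
  else μ

/-- The greedy matching obtained by processing the pairs in the list `l` in order,
starting from the empty matching. -/
def greedy [Fintype S] [DecidableEq A] [DecidableEq S] (q : A → ℕ)
    (l : List (A × S)) : S → Option A :=
  l.foldl (fun μ p => greedyStep q p μ) (fun _ => none)

section Helpers

variable [Fintype S] [DecidableEq A] [DecidableEq S]

lemma greedyStep_persist (q : A → ℕ) (p : A × S) (μ : S → Option A) {s : S} {a : A}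
    (h : μ s = some a) : greedyStep q p μ s = some a := by
  unfold greedyStep
  split
  · next hc =>
    rw [Function.update_apply]
    split
    · next hs => subst hs; rw [hc.1] at h; cases h
    · exact h
  · exact h

lemma foldl_persist (q : A → ℕ) (l : List (A × S)) (μ : S → Option A) {s : S} {a : A}
    (h : μ s = some a) :
    (l.foldl (fun μ p => greedyStep q p μ) μ) s = some a := by
  induction l generalizing μ with
  | nil => exact h
  | cons p t ih => exact ih _ (greedyStep_persist q p μ h)

lemma foldl_mem (q : A → ℕ) (l : List (A × S)) (μ : S → Option A) {s : S} {a : A}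
    (h : (l.foldl (fun μ p => greedyStep q p μ) μ) s = some a) :
    μ s = some a ∨ (a, s) ∈ l := by
  induction l generalizing μ with
  | nil => exact Or.inl h
  | cons p t ih =>
    rcases ih _ h with h' | h'
    · unfold greedyStep at h'
      beta_reduce at h'
      split at h'
      · rw [Function.update_apply] at h'
        split at h'
        · next hs =>
          subst hs
          obtain rfl : p.1 = a := Option.some.inj h'
          exact Or.inr (List.mem_cons_self)
        · exact Or.inl h'
      · exact Or.inl h'
    · exact Or.inr (List.mem_cons_of_mem _ h')

lemma card_le_step (q : A → ℕ) (p : A × S) (μ : S → Option A)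
    (h : ∀ a, (Finset.univ.filter (fun s => μ s = some a)).card ≤ q a) :
    ∀ a, (Finset.univ.filter (fun s => greedyStep q p μ s = some a)).card ≤ q a := by
  intro a
  unfold greedyStep
  split
  · next hc =>
    obtain ⟨h0, hlt⟩ := hc
    by_cases ha : a = p.1
    · subst ha
      have hset : Finset.univ.filter (fun s => Function.update μ p.2 (some p.1) s = some p.1)
          = insert p.2 (Finset.univ.filter (fun s => μ s = some p.1)) := by
        ext x
        simp only [mem_filter, mem_univ, true_and, mem_insert, Function.update_apply]
        by_cases hx : x = p.2
        · simp [hx]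
        · simp [hx]
      rw [hset]
      calc (insert p.2 (Finset.univ.filter (fun s => μ s = some p.1))).card
          ≤ (Finset.univ.filter (fun s => μ s = some p.1)).card + 1 := Finset.card_insert_le _ _
        _ ≤ q p.1 := hlt
    · have hset : Finset.univ.filter (fun s => Function.update μ p.2 (some p.1) s = some a)
          = Finset.univ.filter (fun s => μ s = some a) := by
        ext x
        simp only [mem_filter, mem_univ, true_and, Function.update_apply]
        by_cases hx : x = p.2
        · subst hx
          rw [if_pos rfl, h0]
          constructor
          · intro h'
            exact absurd (Option.some.inj h').symm ha
          · intro h'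
            cases h'
        · simp [hx]
      rw [hset]; exact h _
  · exact h a

lemma card_foldl_le (q : A → ℕ) (l : List (A × S)) (μ : S → Option A)
    (h : ∀ a, (Finset.univ.filter (fun s => μ s = some a)).card ≤ q a) :
    ∀ a, (Finset.univ.filter (fun s => (l.foldl (fun μ p => greedyStep q p μ) μ) s = some a)).card ≤ q a := by
  induction l generalizing μ with
  | nil => exact h
  | cons p t ih => exact ih _ (card_le_step q p μ h)

lemma filter_subset_filter_of_imp {ν μ : S → Option A} (a : A)
    (h : ∀ s, ν s = some a → μ s = some a) :
    Finset.univ.filter (fun s => ν s = some a) ⊆ Finset.univ.filter (fun s => μ s = some a) := by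
  intro x hx
  simp only [mem_filter, mem_univ, true_and] at *
  exact h x hx

/-- Core uniqueness invariant: if `μ` is stable, `ν` only makes assignments that `μ`
makes, and every assignment of `μ` is either already in `ν` or among the remaining
(sorted) pairs `l`, then running greedy on `l` from `ν` reconstructs `μ`. -/
lemma stable_eq_fold (q : A → ℕ) (U : A → S → ℝ) (μ : S → Option A)
    (hstab : IsStable q U μ) :
    ∀ (l : List (A × S)) (ν : S → Option A),
      l.Pairwise (fun p p' => U p'.1 p'.2 < U p.1 p.2) →
      (∀ s a, ν s = some a → μ s = some a) →
      (∀ s a, μ s = some a → ν s = some a ∨ (a, s) ∈ l) →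
      μ = l.foldl (fun μ p => greedyStep q p μ) ν := by
  intro l
  induction l with
  | nil =>
    intro ν _ hA hB
    funext s
    simp only [List.foldl_nil]
    cases hμ : μ s with
    | none =>
      cases hν : ν s with
      | none => rfl
      | some a => rw [hA s a hν] at hμ; cases hμ
    | some a =>
      rcases hB s a hμ with h | h
      · rw [h]
      · cases h
  | cons p t ih =>
    intro ν hsort hA hB
    obtain ⟨a₀, s₀⟩ := p
    rw [List.pairwise_cons] at hsort
    obtain ⟨hhead, htail⟩ := hsort
    rw [List.foldl_cons]
    refine ih _ htail ?_ ?_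
    · -- (A') for the new state
      intro s a h
      unfold greedyStep at h
      split at h
      · next hc =>
        rw [Function.update_apply] at h
        split at h
        · next hs =>
          subst hs
          obtain rfl : a₀ = a := Option.some.injEq _ _ ▸ h
          -- show μ s = some a₀ using stability
          by_contra hne
          refine hstab.2 a₀ s ⟨hne, ?_, ?_⟩
          · intro a' hμ'
            have ha' : a' ≠ a₀ := fun h' => hne (h' ▸ hμ')
            rcases hB s a' hμ' with hν' | hmem
            · rw [hc.1] at hν'; cases hν'
            · rcases List.mem_cons.1 hmem with he | ht
              · exact absurd (congrArg Prod.fst he) ha'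
              · exact hhead _ ht
          · by_cases hcard : (Finset.univ.filter (fun s' => μ s' = some a₀)).card < q a₀
            · exact Or.inl hcard
            · push_neg at hcard
              have hsub := filter_subset_filter_of_imp (μ := μ) (ν := ν) a₀
                (fun x hx => hA x a₀ hx)
              have hlt : (Finset.univ.filter (fun s' => ν s' = some a₀)).card
                  < (Finset.univ.filter (fun s' => μ s' = some a₀)).card :=
                lt_of_lt_of_le hc.2 hcard
              have hne' : Finset.univ.filter (fun s' => ν s' = some a₀)
                  ≠ Finset.univ.filter (fun s' => μ s' = some a₀) := by
                intro h'
                rw [h'] at hlt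
                exact lt_irrefl _ hlt
              obtain ⟨s', hs'mem, hs'not⟩ :=
                Finset.exists_of_ssubset (ssubset_of_subset_of_ne hsub hne')
              simp only [mem_filter, mem_univ, true_and] at hs'mem hs'not
              refine Or.inr ⟨s', hs'mem, ?_⟩
              rcases hB s' a₀ hs'mem with hν' | hmem
              · exact absurd hν' hs'not
              · rcases List.mem_cons.1 hmem with he | ht
                · have : s' = s := congrArg Prod.snd he
                  subst this
                  exact absurd hs'mem hne
                · exact hhead _ ht
        · exact hA s a h
      · exact hA s a h
    · -- (B') for the new state
      intro s a hμ
      rcases hB s a hμ with hν | hmem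
      · exact Or.inl (greedyStep_persist q _ ν hν)
      · rcases List.mem_cons.1 hmem with he | ht
        · injection he with h1 h2
          subst h1; subst h2
          left
          unfold greedyStep
          split
        -- condition holds: update at s gives some a
          · simp [Function.update_apply]
          · next hcond =>
            show ν s = some a
            cases hν2 : ν s with
            | some a'' =>
              have h3 := hA s a'' hν2
              rw [hμ] at h3
              exact h3.symm
            | none =>
              exfalso
              have hge : q a ≤ (Finset.univ.filter (fun s' => ν s' = some a)).card := by
                by_contra hlt
                push_neg at hlt
                exact hcond ⟨hν2, hlt⟩
              have hsub := filter_subset_filter_of_imp (μ := μ) (ν := ν) a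
                (fun x hx => hA x a hx)
              have heq := Finset.eq_of_subset_of_card_le hsub
                (le_trans (hstab.1 a) hge)
              have hmem2 : s ∈ Finset.univ.filter (fun s' => μ s' = some a) := by
                simp only [mem_filter, mem_univ, true_and]; exact hμ
              rw [← heq] at hmem2
              simp only [mem_filter, mem_univ, true_and] at hmem2
              rw [hν2] at hmem2; cases hmem2
        · exact Or.inr ht

end Helpers

/-- In the aligned-preference matching market (common pairwise
distinct positive values `U_{as}`), the unique stable matching is produced by the
greedy algorithm that processes all pairs in decreasing order of `U_{as}`, matching
`(a, s)` whenever `s` is unmatched and `a` has residual capacity: the greedy matching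
is stable, and every stable matching equals it. -/
theorem stmt_4 [Fintype A] [Fintype S] [DecidableEq A] [DecidableEq S]
    (q : A → ℕ) (U : A → S → ℝ) (l : List (A × S))
    (hq : ∀ a, 1 ≤ q a)
    (hdistinct : ∀ a s a' s', U a s = U a' s' → (a, s) = (a', s'))
    (hpos : ∀ a s, 0 < U a s)
    (hl_all : ∀ p : A × S, p ∈ l)
    (hl_sorted : l.Pairwise (fun p p' => U p'.1 p'.2 < U p.1 p.2)) :
    IsStable q U (greedy q l) ∧ ∀ μ : S → Option A, IsStable q U μ → μ = greedy q l := by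
  have hmatch : IsMatching q (greedy q l) := by
    intro a
    exact card_foldl_le q l _ (fun a => by simp) a
  constructor
  · refine ⟨hmatch, ?_⟩
    intro a s hblock
    obtain ⟨hne, hpref, hcap⟩ := hblock
    obtain ⟨l₁, l₂, hdec⟩ := List.append_of_mem (hl_all (a, s))
    set ν₁ : S → Option A := l₁.foldl (fun μ p => greedyStep q p μ) (fun _ => none) with hν₁
    have hgreedy : greedy q l = l₂.foldl (fun μ p => greedyStep q p μ) (greedyStep q (a, s) ν₁) := by
      rw [hdec]
      unfold greedy
      rw [List.foldl_append, List.foldl_cons]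
    -- sortedness facts
    rw [hdec, List.pairwise_append] at hl_sorted
    obtain ⟨hs1, hs2, hcross⟩ := hl_sorted
    rw [List.pairwise_cons] at hs2
    have hbig : ∀ p' ∈ l₁, U a s < U p'.1 p'.2 := by
      intro p' hp'
      exact hcross p' hp' (a, s) (List.mem_cons_self)
    -- the three cases
    by_cases hc : ν₁ s = none ∧ (Finset.univ.filter (fun s' => ν₁ s' = some a)).card < q a
    · -- the step matched (a,s), so greedy q l s = some a, contradiction with hne
      apply hne
      rw [hgreedy]
      apply foldl_persist
      unfold greedyStep
      rw [if_pos hc]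
      simp [Function.update_apply]
    · cases hν : ν₁ s with
      | some a' =>
        -- s was matched earlier to a', which has higher value: contradicts hpref
        have hfin : greedy q l s = some a' := by
          rw [hgreedy]
          apply foldl_persist
          exact greedyStep_persist q _ _ hν
        have hlt := hpref a' hfin
        have hmem := foldl_mem q l₁ _ hν
        rcases hmem with h' | h'
        · cases h'
        · exact absurd (hbig _ h') (not_lt.2 (le_of_lt hlt))
      | none =>
        -- capacity of a was full already in ν₁
        have hge : q a ≤ (Finset.univ.filter (fun s' => ν₁ s' = some a)).card := by
          by_contra hlt
          push_neg at hlt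
          exact hc ⟨hν, hlt⟩
        have hsub : Finset.univ.filter (fun s' => ν₁ s' = some a)
            ⊆ Finset.univ.filter (fun s' => greedy q l s' = some a) := by
          apply filter_subset_filter_of_imp
          intro x hx
          rw [hgreedy]
          apply foldl_persist
          exact greedyStep_persist q _ _ hx
        rcases hcap with hlt | ⟨s', hs'g, hs'lt⟩
        · exact absurd (lt_of_le_of_lt (le_trans hge (Finset.card_le_card hsub)) hlt)
            (lt_irrefl _)
        · -- the sets are equal, so s' was matched to a already in ν₁, a pair in l₁
          have heq := Finset.eq_of_subset_of_card_le hsub (le_trans (hmatch a) hge)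
          have hmem2 : s' ∈ Finset.univ.filter (fun s'' => greedy q l s'' = some a) := by
            simp only [mem_filter, mem_univ, true_and]; exact hs'g
          rw [← heq] at hmem2
          simp only [mem_filter, mem_univ, true_and] at hmem2
          rcases foldl_mem q l₁ _ hmem2 with h' | h'
          · cases h'
          · exact absurd (hbig _ h') (not_lt.2 (le_of_lt hs'lt))
  · intro μ hμ
    exact stable_eq_fold q U μ hμ l (fun _ => none) hl_sorted
      (fun s a h => by cases h)
      (fun s a _ => Or.inr (hl_all (a, s)))
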